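/- Let λ ∈ (0,1) be irrational, Γ = ℤ[λ, λ⁻¹], and consider the partial action of Γ ⋊ ⟨λ⟩ on the Cantor space [0₊, 1₋] ⊂ ℝ_Γ. This partial action is expansive: there exists ε > 0 such that for all distinct x, y ∈ [0₊, 1₋] there exists g ∈ Γ ⋊ ⟨λ⟩ with both gx, gy defined and d(gx, gy) > ε. -/

import Mathlib

/-- The doubled-points space `ℝ_Γ`: points of `ℝ \ Γ` together with two points
`a₋ = (a, false)` and `a₊ = (a, true)` for each `a ∈ Γ`, linearly ordered lexicographically. -/
def RGamma (Γ : Set ℝ) : Type :=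
  {p : ℝ ×ₗ Bool // (ofLex p).1 ∈ Γ ∨ (ofLex p).2 = false}

noncomputable instance (Γ : Set ℝ) : LinearOrder (RGamma Γ) :=
  inferInstanceAs (LinearOrder {p : ℝ ×ₗ Bool // (ofLex p).1 ∈ Γ ∨ (ofLex p).2 = false})

/-- `ℝ_Γ` carries the order topology. -/
noncomputable instance (Γ : Set ℝ) : TopologicalSpace (RGamma Γ) := Preorder.topology _

instance (Γ : Set ℝ) : OrderTopology (RGamma Γ) := ⟨rfl⟩

/-- The point `a₊` for `a ∈ Γ`. -/
def RGamma.plus (Γ : Set ℝ) (a : ℝ) (ha : a ∈ Γ) : RGamma Γ :=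
  ⟨toLex (a, true), Or.inl ha⟩

/-- The point `a₋` for `a ∈ Γ`. -/
def RGamma.minus (Γ : Set ℝ) (a : ℝ) (_ha : a ∈ Γ) : RGamma Γ :=
  ⟨toLex (a, false), Or.inr rfl⟩

/-- The canonical quotient map `q : ℝ_Γ → ℝ`, `t ↦ t`, `a₊, a₋ ↦ a`. -/
def RGamma.q (Γ : Set ℝ) (x : RGamma Γ) : ℝ := (ofLex x.1).1

/-- The action of a group element `(c, μ)` on `ℝ_Γ`: `x ↦ μ(q(x) + c)` with signs preserved,
given that the underlying affine map preserves `Γ`. -/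
def RGamma.act (Γ : Set ℝ) (c μ : ℝ) (h : ∀ t ∈ Γ, μ * (t + c) ∈ Γ) (x : RGamma Γ) :
    RGamma Γ :=
  ⟨toLex (μ * ((ofLex x.1).1 + c), (ofLex x.1).2), by
    rcases x.2 with h' | h'
    · exact Or.inl (h _ h')
    · exact Or.inr h'⟩

/-- `ℤ[λ, λ⁻¹]` as a subset of `ℝ`. -/
def steinRing (lam : ℝ) : Set ℝ := (Subring.closure {lam, lam⁻¹} : Subring ℝ)

/-- The Cantor space `[0₊, 1₋] ⊂ ℝ_Γ`. -/
def RGamma.unitInterval (Γ : Set ℝ) : Set (RGamma Γ) :=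
  {x | toLex ((0:ℝ), true) ≤ x.1 ∧ x.1 ≤ toLex ((1:ℝ), false)}


/-! ### Auxiliary order and completeness structure on `RGamma` -/

namespace RGamma
variable {Γ : Set ℝ}

abbrev fst (x : RGamma Γ) : ℝ := (ofLex x.1).1
abbrev snd (x : RGamma Γ) : Bool := (ofLex x.1).2

lemma le_def {x y : RGamma Γ} :
    x ≤ y ↔ fst x < fst y ∨ (fst x = fst y ∧ snd x ≤ snd y) :=
  Prod.Lex.le_iff (x := x.1) (y := y.1)

lemma lt_def {x y : RGamma Γ} :
    x < y ↔ fst x < fst y ∨ (fst x = fst y ∧ snd x < snd y) :=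
  Prod.Lex.lt_iff (x := x.1) (y := y.1)

lemma fst_mono {x y : RGamma Γ} (h : x ≤ y) : fst x ≤ fst y := by
  rcases le_def.1 h with h | h
  · exact h.le
  · exact h.1.le

def pt0 (Γ : Set ℝ) (r : ℝ) : RGamma Γ := ⟨toLex (r, false), Or.inr rfl⟩

@[simp] lemma fst_pt0 (r : ℝ) : fst (pt0 Γ r) = r := rfl
@[simp] lemma snd_pt0 (r : ℝ) : snd (pt0 Γ r) = false := rfl

lemma eq_mk {x : RGamma Γ} {r : ℝ} {b : Bool} (h1 : fst x = r) (h2 : snd x = b)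
    (hp : r ∈ Γ ∨ b = false) : x = ⟨toLex (r, b), hp⟩ := by
  refine Subtype.ext ?_
  show x.1 = toLex (r, b)
  rw [show x.1 = toLex (fst x, snd x) from rfl, h1, h2]

lemma bddAbove_iff {S : Set (RGamma Γ)} : BddAbove S ↔ BddAbove (fst '' S) := by
  constructor
  · rintro ⟨B, hB⟩
    exact ⟨fst B, by rintro r ⟨x, hx, rfl⟩; exact fst_mono (hB hx)⟩
  · rintro ⟨M, hM⟩
    refine ⟨pt0 Γ (M + 1), fun x hx => ?_⟩
    exact le_def.2 (Or.inl (lt_of_le_of_lt (hM ⟨x, hx, rfl⟩) (lt_add_one M)))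

open Classical in
noncomputable def rsup (S : Set (RGamma Γ)) : RGamma Γ :=
  if h : BddAbove S ∧ ∃ hr : sSup (fst '' S) ∈ Γ,
      @Membership.mem (RGamma Γ) (Set (RGamma Γ)) _ S ⟨toLex (sSup (fst '' S), true), Or.inl hr⟩ then
    ⟨toLex (sSup (fst '' S), true), Or.inl h.2.choose⟩
  else pt0 Γ (sSup (fst '' S))

noncomputable instance : SupSet (RGamma Γ) := ⟨rsup⟩

lemma sSup_def (S : Set (RGamma Γ)) : sSup S = rsup S := rfl

lemma isLUB_rsup (S : Set (RGamma Γ)) (hbdd : BddAbove S) (hne : S.Nonempty) :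
    IsLUB S (sSup S) := by
  rw [sSup_def]
  set r := sSup (fst '' S) with hrdef
  have hlub : IsLUB (fst '' S) r := isLUB_csSup (hne.image _) (bddAbove_iff.1 hbdd)
  by_cases h : BddAbove S ∧ ∃ hr : sSup (fst '' S) ∈ Γ, @Membership.mem (RGamma Γ) (Set (RGamma Γ)) _ S ⟨toLex (sSup (fst '' S), true), Or.inl hr⟩
  on_goal 1 => rw [show rsup S = _ from dif_pos h]
  on_goal 2 => rw [show rsup S = _ from dif_neg h]
  · obtain ⟨hbdd', hrΓ, hmem⟩ := h
    constructor
    · intro x hx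
      rcases eq_or_lt_of_le (hlub.1 ⟨x, hx, rfl⟩) with he | hl
      · exact le_def.2 (Or.inr ⟨he, Bool.le_true _⟩)
      · exact le_def.2 (Or.inl hl)
    · intro u hu
      exact hu hmem
  · constructor
    · intro x hx
      rcases eq_or_lt_of_le (hlub.1 ⟨x, hx, rfl⟩) with he | hl
      · cases hsx : snd x with
        | false => exact le_def.2 (Or.inr ⟨he, by rw [hsx]; exact le_refl _⟩)
        | true =>
          exfalso
          have hxΓ : fst x ∈ Γ := by
            rcases x.2 with h' | h'
            · exact h'
            · exact absurd (h'.symm.trans hsx) Bool.false_ne_true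
          have hrΓ : r ∈ Γ := by rwa [he] at hxΓ
          refine h ⟨hbdd, hrΓ, ?_⟩
          rw [← eq_mk he hsx (Or.inl hrΓ)]
          exact hx
      · exact le_def.2 (Or.inl hl)
    · intro u hu
      have hru : r ≤ fst u := hlub.2 (by rintro t ⟨x, hx, rfl⟩; exact fst_mono (hu hx))
      rcases eq_or_lt_of_le hru with he | hl
      · exact le_def.2 (Or.inr ⟨he, Bool.false_le _⟩)
      · exact le_def.2 (Or.inl hl)

noncomputable instance : ConditionallyCompleteLinearOrder (RGamma Γ) :=
  { conditionallyCompleteLatticeOfLatticeOfsSup _ isLUB_rsup,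
    (inferInstance : LinearOrder (RGamma Γ)) with
    csSup_of_not_bddAbove := by
      intro s hs
      show rsup s = rsup ∅
      have h1 : ¬ BddAbove (fst '' s) := fun hb => hs (bddAbove_iff.2 hb)
      rw [show rsup s = _ from dif_neg (fun hc => hs hc.1), show rsup ∅ = _ from dif_neg (by
        rintro ⟨-, hr, hmem⟩
        exact absurd hmem (Set.notMem_empty _))]
      simp only [Set.image_empty]
      congr 1
      rw [Real.sSup_of_not_bddAbove h1, Real.sSup_empty]
    csInf_of_not_bddBelow := by
      intro s hs
      show rsup (lowerBounds s) = rsup (lowerBounds ∅)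
      have h1 : lowerBounds s = ∅ := by
        rw [Set.eq_empty_iff_forall_notMem]
        exact fun x hx => hs ⟨x, hx⟩
      have h2 : lowerBounds (∅ : Set (RGamma Γ)) = Set.univ := lowerBounds_empty
      rw [h1, h2]
      have h3 : ¬ BddAbove (Set.univ : Set (RGamma Γ)) := by
        rintro ⟨B, hB⟩
        have := fst_mono (hB (Set.mem_univ (pt0 Γ (fst B + 1))))
        simp at this
        linarith
      rw [show rsup ∅ = _ from dif_neg (by rintro ⟨-, hr, hmem⟩; exact absurd hmem (Set.notMem_empty _)),
        show rsup Set.univ = _ from dif_neg (fun hc => h3 hc.1)]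
      simp only [Set.image_empty]
      congr 1
      rw [Real.sSup_empty, Real.sSup_of_not_bddAbove (fun hb => h3 (bddAbove_iff.2 hb))] }

end RGamma

/-! ### Auxiliary metric lemma -/

lemma exists_dist_le_of_compact {X : Type*} [MetricSpace X] {L U : Set X}
    (hL : IsCompact L) (hU : IsCompact U) (hLn : L.Nonempty) (hUn : U.Nonempty)
    (hd : Disjoint L U) : ∃ ε > (0:ℝ), ∀ p ∈ L, ∀ q ∈ U, ε ≤ dist p q := by
  obtain ⟨p₀, hp₀, hmin⟩ := hL.exists_isMinOn hLn (Metric.continuous_infDist_pt U).continuousOn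
  refine ⟨Metric.infDist p₀ U, ?_, ?_⟩
  · exact (hU.isClosed.notMem_iff_infDist_pos hUn).1 (Set.disjoint_left.1 hd hp₀)
  · intro p hp q hq
    exact le_trans (hmin hp) (Metric.infDist_le_dist_of_mem hq)

/-! ### Arithmetic facts about `steinRing` -/

lemma lam_mem {lam : ℝ} : lam ∈ steinRing lam :=
  Subring.subset_closure (Set.mem_insert _ _)

lemma lam_inv_mem {lam : ℝ} : lam⁻¹ ∈ steinRing lam :=
  Subring.subset_closure (Set.mem_insert_of_mem _ rfl)

lemma stein_zpow_mem {lam : ℝ} (n : ℤ) : lam ^ n ∈ steinRing lam := by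
  rcases n with n | n
  · rw [Int.ofNat_eq_coe, zpow_natCast]
    exact pow_mem lam_mem n
  · rw [zpow_negSucc, ← inv_pow]
    exact pow_mem lam_inv_mem (n + 1)

lemma stein_intCast_mem {lam : ℝ} (k : ℤ) : (k : ℝ) ∈ steinRing lam :=
  intCast_mem (Subring.closure {lam, lam⁻¹}) k

lemma stein_dense {lam : ℝ} (h0 : 0 < lam) (h1 : lam < 1) {u v : ℝ} (huv : u < v) :
    ∃ γ ∈ steinRing lam, u < γ ∧ γ < v := by
  obtain ⟨n, hn⟩ := exists_pow_lt_of_lt_one (by linarith : (0:ℝ) < v - u) h1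
  have hpow : (0:ℝ) < lam ^ n := pow_pos h0 n
  set k : ℤ := ⌊u / lam ^ n⌋ + 1 with hk
  refine ⟨lam ^ n * (k : ℝ), mul_mem (pow_mem lam_mem n) (stein_intCast_mem k), ?_, ?_⟩
  · have hlt : u / lam ^ n < (k : ℝ) := by
      rw [hk]; push_cast; exact Int.lt_floor_add_one (u / lam ^ n)
    calc u = lam ^ n * (u / lam ^ n) := by field_simp
    _ < lam ^ n * k := mul_lt_mul_of_pos_left hlt hpow
  · have hkle : (k : ℝ) ≤ u / lam ^ n + 1 := by
      rw [hk]; push_cast; linarith [Int.floor_le (u / lam ^ n)]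
    have hmul : lam ^ n * (k:ℝ) ≤ lam ^ n * (u / lam ^ n + 1) :=
      mul_le_mul_of_nonneg_left hkle hpow.le
    calc lam ^ n * (k:ℝ) ≤ lam ^ n * (u / lam ^ n + 1) := hmul
    _ = u + lam ^ n := by
      rw [mul_add, mul_one, mul_div_cancel₀ _ (ne_of_gt hpow)]
    _ < v := by linarith

/-- choose `n` with `lam^n * δ ∈ (lam/2, 1/2]` -/
lemma stein_scale {lam : ℝ} (h0 : 0 < lam) (h1 : lam < 1) {δ : ℝ} (hδ : 0 < δ) :
    ∃ n : ℤ, lam / 2 < lam ^ n * δ ∧ lam ^ n * δ ≤ 1 / 2 := by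
  have hinv : 1 < lam⁻¹ := (one_lt_inv₀ h0).2 h1
  obtain ⟨mm, hm1, hm2⟩ := exists_mem_Ioc_zpow (by linarith : (0:ℝ) < 2 * δ) hinv
  rw [inv_zpow] at hm1
  rw [inv_zpow] at hm2
  refine ⟨mm + 1, ?_, ?_⟩
  · have hmmpos : (0:ℝ) < lam ^ mm := zpow_pos h0 mm
    have h2 : 1 < lam ^ mm * (2 * δ) := by
      calc (1:ℝ) = lam ^ mm * (lam ^ mm)⁻¹ := (mul_inv_cancel₀ (ne_of_gt hmmpos)).symm
      _ < lam ^ mm * (2 * δ) := mul_lt_mul_of_pos_left hm1 hmmpos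
    have h3 : lam * 1 < lam * (lam ^ mm * (2 * δ)) := mul_lt_mul_of_pos_left h2 h0
    have h4 : lam ^ (mm + 1) = lam ^ mm * lam := zpow_add_one₀ (ne_of_gt h0) mm
    rw [h4]; nlinarith
  · have hpos : (0:ℝ) < lam ^ (mm + 1) := zpow_pos h0 _
    have h2 : lam ^ (mm + 1) * (2 * δ) ≤ lam ^ (mm + 1) * (lam ^ (mm + 1))⁻¹ :=
      mul_le_mul_of_nonneg_left hm2 hpos.le
    rw [mul_inv_cancel₀ (ne_of_gt hpos)] at h2
    nlinarith

/-- for `λ ∈ (0,1)` irrational and `Γ = ℤ[λ,λ⁻¹]`, the partial action of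
`Γ ⋊ ⟨λ⟩` on the Cantor space `[0₊,1₋] ⊂ ℝ_Γ` is expansive: for any compatible metric
there is `ε > 0` such that any two distinct points of `[0₊,1₋]` are moved, by some group
element `(c, λⁿ)` keeping both points inside `[0₊,1₋]`, to points at distance `> ε`. -/
theorem stein_partial_action_expansive (lam : ℝ) (h0 : 0 < lam) (h1 : lam < 1)
    (hirr : Irrational lam)
    (m : MetricSpace (RGamma (steinRing lam)))
    (hm : m.toUniformSpace.toTopologicalSpace
            = inferInstanceAs (TopologicalSpace (RGamma (steinRing lam)))) :
    ∃ ε > (0:ℝ), ∀ x y : RGamma (steinRing lam),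
      x ∈ RGamma.unitInterval (steinRing lam) → y ∈ RGamma.unitInterval (steinRing lam) →
      x ≠ y →
      ∃ (c : ℝ) (_ : c ∈ steinRing lam) (n : ℤ)
        (h : ∀ t ∈ steinRing lam, lam ^ n * (t + c) ∈ steinRing lam),
        RGamma.act (steinRing lam) c (lam ^ n) h x ∈ RGamma.unitInterval (steinRing lam) ∧
        RGamma.act (steinRing lam) c (lam ^ n) h y ∈ RGamma.unitInterval (steinRing lam) ∧
        ε < m.toPseudoMetricSpace.toDist.dist
              (RGamma.act (steinRing lam) c (lam ^ n) h x)
              (RGamma.act (steinRing lam) c (lam ^ n) h y) := by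
  classical
  have hlamΓ : lam ∈ (steinRing lam) := lam_mem
  have h0Γ : (0:ℝ) ∈ (steinRing lam) := zero_mem (Subring.closure {lam, lam⁻¹})
  have h1Γ : (1:ℝ) ∈ (steinRing lam) := one_mem (Subring.closure {lam, lam⁻¹})
  have hlamne : lam ≠ 0 := ne_of_gt h0
  -- stability of (steinRing lam) under the affine maps
  have hstab : ∀ c ∈ (steinRing lam), ∀ n : ℤ, ∀ t ∈ (steinRing lam), lam ^ n * (t + c) ∈ (steinRing lam) := fun c hc n t ht =>
    mul_mem (stein_zpow_mem n) (add_mem ht hc)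
  -- basic points
  set lo : RGamma (steinRing lam) := ⟨toLex ((0:ℝ), true), Or.inl h0Γ⟩ with hlo
  set hi : RGamma (steinRing lam) := ⟨toLex ((1:ℝ), false), Or.inr rfl⟩ with hhi
  have hmemI : ∀ x : RGamma (steinRing lam), x ∈ RGamma.unitInterval (steinRing lam) ↔ lo ≤ x ∧ x ≤ hi := fun x => Iff.rfl
  set P : RGamma (steinRing lam) := RGamma.pt0 (steinRing lam) (lam / 8) with hP
  set Q : RGamma (steinRing lam) := RGamma.pt0 (steinRing lam) (lam / 4) with hQ
  set L : Set (RGamma (steinRing lam)) := Set.Icc lo P with hL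
  set U : Set (RGamma (steinRing lam)) := Set.Icc Q hi with hU
  have hLc : IsCompact L := isCompact_Icc
  have hUc : IsCompact U := isCompact_Icc
  have hLn : L.Nonempty := ⟨lo, le_refl _, RGamma.le_def.2 (Or.inl (by show (0:ℝ) < lam / 8; linarith))⟩
  have hUn : U.Nonempty := ⟨hi, RGamma.le_def.2 (Or.inl (by show lam/4 < 1; linarith)), le_refl _⟩
  have hdisj : Disjoint L U := by
    rw [Set.disjoint_left]
    rintro x ⟨-, hx1⟩ ⟨hx2, -⟩
    have h1 := RGamma.fst_mono hx1
    have h2 := RGamma.fst_mono hx2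
    have e1 : RGamma.fst P = lam / 8 := rfl
    have e2 : RGamma.fst Q = lam / 4 := rfl
    rw [e1] at h1
    rw [e2] at h2
    linarith
  obtain ⟨ε₁, hε₁pos, hε₁⟩ :=
    @exists_dist_le_of_compact _ m L U (by rw [hm]; exact hLc) (by rw [hm]; exact hUc)
      hLn hUn hdisj
  -- the doubled pair at lam
  set Pb : Bool → RGamma (steinRing lam) := fun b => ⟨toLex (lam, b), Or.inl hlamΓ⟩ with hPb
  have hPbne : Pb false ≠ Pb true := by
    intro h
    have := congrArg (fun z : RGamma (steinRing lam) => RGamma.snd z) h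
    simp [hPb, RGamma.snd] at this
  set ε₂ : ℝ := m.toPseudoMetricSpace.toDist.dist (Pb false) (Pb true) with hε₂
  have hε₂pos : 0 < ε₂ := @dist_pos _ m _ _ |>.2 hPbne
  refine ⟨min ε₁ ε₂ / 2, by positivity, ?_⟩
  intro x y hx hy hxy
  rw [hmemI] at hx hy
  -- the key construction for points with distinct real parts
  have key : ∀ x y : RGamma (steinRing lam), lo ≤ x → x ≤ hi → lo ≤ y → y ≤ hi →
      RGamma.fst x < RGamma.fst y →
      ∃ (c : ℝ) (_ : c ∈ (steinRing lam)) (n : ℤ)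
        (h : ∀ t ∈ (steinRing lam), lam ^ n * (t + c) ∈ (steinRing lam)),
        RGamma.act (steinRing lam) c (lam ^ n) h x ∈ L ∧ RGamma.act (steinRing lam) c (lam ^ n) h y ∈ U := by
    clear hxy hx hy x y
    intro x y hx1 hx2 hy1 hy2 hfst
    set a := RGamma.fst x with ha
    set b := RGamma.fst y with hb
    have ha0 : 0 ≤ a := by exact RGamma.fst_mono hx1
    have hb1 : b ≤ 1 := by exact RGamma.fst_mono hy2
    set δ := b - a with hδ
    have hδ0 : 0 < δ := by simp [hδ]; linarith
    obtain ⟨n, hs1, hs2⟩ := stein_scale h0 h1 hδ0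
    set s := lam ^ n * δ with hs
    have hnpos : (0:ℝ) < lam ^ n := zpow_pos h0 n
    obtain ⟨γ, hγΓ, hγ1, hγ2⟩ := stein_dense h0 h1
      (show -(lam ^ n * a) < lam / 8 - lam ^ n * a by linarith)
    set c := lam ^ (-n) * γ with hc
    have hcΓ : c ∈ (steinRing lam) := mul_mem (stein_zpow_mem (-n)) hγΓ
    have hcan : lam ^ n * c = γ := by
      rw [hc, ← mul_assoc, ← zpow_add₀ hlamne, add_neg_cancel, zpow_zero, one_mul]
    set t := lam ^ n * a + γ with ht
    have ht0 : 0 < t := by simp [ht]; linarith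
    have ht8 : t < lam / 8 := by simp [ht]; linarith
    refine ⟨c, hcΓ, n, hstab c hcΓ n, ?_, ?_⟩
    · -- act x ∈ L
      have hfx : RGamma.fst (RGamma.act (steinRing lam) c (lam ^ n) (hstab c hcΓ n) x) = t := by
        show lam ^ n * (a + c) = t
        rw [mul_add, hcan, ht]
      constructor
      · exact RGamma.le_def.2 (Or.inl (by rw [hfx]; exact ht0))
      · exact RGamma.le_def.2 (Or.inl (by rw [hfx]; exact ht8))
    · -- act y ∈ U
      have hfy : RGamma.fst (RGamma.act (steinRing lam) c (lam ^ n) (hstab c hcΓ n) y) = t + s := by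
        show lam ^ n * (b + c) = t + s
        rw [mul_add, hcan, ht, hs, hδ]; ring
      constructor
      · refine RGamma.le_def.2 (Or.inl ?_)
        rw [hfy]
        show lam / 4 < t + s
        linarith
      · refine RGamma.le_def.2 (Or.inl ?_)
        rw [hfy]
        show t + s < 1
        linarith
  have hLsubI : L ⊆ RGamma.unitInterval (steinRing lam) := by
    rintro z ⟨hz1, hz2⟩
    exact (hmemI z).2 ⟨hz1, le_trans hz2 (RGamma.le_def.2 (Or.inl (by show lam/8 < 1; linarith)))⟩
  have hUsubI : U ⊆ RGamma.unitInterval (steinRing lam) := by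
    rintro z ⟨hz1, hz2⟩
    refine (hmemI z).2 ⟨le_trans (RGamma.le_def.2 (Or.inl ?_)) hz1, hz2⟩
    show (0:ℝ) < lam / 4
    linarith
  rcases lt_trichotomy (RGamma.fst x) (RGamma.fst y) with hlt | heq | hgt
  · obtain ⟨c, hcΓ, n, hst, hgx, hgy⟩ := key x y hx.1 hx.2 hy.1 hy.2 hlt
    refine ⟨c, hcΓ, n, hst, hLsubI hgx, hUsubI hgy, ?_⟩
    calc min ε₁ ε₂ / 2 < ε₁ := by
          have := min_le_left ε₁ ε₂; linarith
    _ ≤ _ := hε₁ _ hgx _ hgy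
  · -- doubled points case
    have hsne : RGamma.snd x ≠ RGamma.snd y := by
      intro hsnd
      exact hxy ((RGamma.eq_mk heq hsnd y.2).trans (RGamma.eq_mk rfl rfl y.2).symm)
    set c := lam - RGamma.fst x with hc
    have hxΓ : RGamma.fst x ∈ (steinRing lam) := by
      rcases x.2 with h' | h'
      · exact h'
      · rcases y.2 with h'' | h''
        · rw [heq]; exact h''
        · exact absurd (h'.trans h''.symm) hsne
    have hcΓ : c ∈ (steinRing lam) := sub_mem hlamΓ hxΓ
    have hst := hstab c hcΓ 0
    have hfx : RGamma.fst (RGamma.act (steinRing lam) c (lam ^ (0:ℤ)) hst x) = lam := by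
      show lam ^ (0:ℤ) * (RGamma.fst x + c) = lam
      rw [zpow_zero, one_mul, hc]; ring
    have hfy : RGamma.fst (RGamma.act (steinRing lam) c (lam ^ (0:ℤ)) hst y) = lam := by
      show lam ^ (0:ℤ) * (RGamma.fst y + c) = lam
      rw [zpow_zero, one_mul, hc, ← heq]; ring
    have hgx : RGamma.act (steinRing lam) c (lam ^ (0:ℤ)) hst x = Pb (RGamma.snd x) :=
      RGamma.eq_mk hfx rfl (Or.inl hlamΓ)
    have hgy : RGamma.act (steinRing lam) c (lam ^ (0:ℤ)) hst y = Pb (RGamma.snd y) :=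
      RGamma.eq_mk hfy rfl (Or.inl hlamΓ)
    have hmemPb : ∀ b, Pb b ∈ RGamma.unitInterval (steinRing lam) := by
      intro b
      refine (hmemI _).2 ⟨RGamma.le_def.2 (Or.inl ?_), RGamma.le_def.2 (Or.inl ?_)⟩
      · exact h0
      · exact h1
    refine ⟨c, hcΓ, 0, hst, by rw [hgx]; exact hmemPb _, by rw [hgy]; exact hmemPb _, ?_⟩
    rw [hgx, hgy]
    have hhalf : min ε₁ ε₂ / 2 < ε₂ := by
      have := min_le_right ε₁ ε₂; linarith
    cases hbx : RGamma.snd x with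
    | false =>
      have hby : RGamma.snd y = true := by
        cases hby : RGamma.snd y
        · exact absurd (hbx.trans hby.symm) hsne
        · rfl
      rw [hbx, hby] at *
      exact lt_of_lt_of_le hhalf (le_of_eq hε₂)
    | true =>
      have hby : RGamma.snd y = false := by
        cases hby : RGamma.snd y
        · rfl
        · exact absurd (hbx.trans hby.symm) hsne
      rw [hby]
      calc min ε₁ ε₂ / 2 < ε₂ := hhalf
      _ = _ := by rw [hε₂]; exact @dist_comm _ m.toPseudoMetricSpace _ _
  · obtain ⟨c, hcΓ, n, hst, hgy, hgx⟩ := key y x hy.1 hy.2 hx.1 hx.2 hgt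
    refine ⟨c, hcΓ, n, hst, hUsubI hgx, hLsubI hgy, ?_⟩
    calc min ε₁ ε₂ / 2 < ε₁ := by
          have := min_le_left ε₁ ε₂; linarith
    _ ≤ _ := by
          rw [show m.toPseudoMetricSpace.toDist.dist (RGamma.act (steinRing lam) c (lam ^ n) hst x)
                (RGamma.act (steinRing lam) c (lam ^ n) hst y)
              = m.toPseudoMetricSpace.toDist.dist (RGamma.act (steinRing lam) c (lam ^ n) hst y)
                (RGamma.act (steinRing lam) c (lam ^ n) hst x) from @dist_comm _ m.toPseudoMetricSpace _ _]
          exact hε₁ _ hgy _ hgx
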